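/- Let N ≥ 3, μ₀ = -(N-2)²/4 ≤ μ₁ < 0 ≤ μ₂ and p, q > 0. There exist positive constants t, c such that the pair (u, v) = (t(|x|^{τ₊(μ₁)} - |x|^{τ₁}), t|x|^{τ₂}), with τ₂ = q·τ₊(μ₁)+2 ∈ (τ₋(μ₂), τ₊(μ₂)) and τ₁ = p·τ₂+2 > τ₊(μ₁), satisfies -Δu + μ₁|x|^{-2}u ≥ v^p and -Δv + μ₂|x|^{-2}v ≥ u^q pointwise on B₁(0) \ {0}, provided 2/(-τ₊(μ₁)) < q < (N+τ₊(μ₂))/(-τ₊(μ₁)) and τ₊(μ₁)(pq-1)+2p+2 > 0 and p, q > 1. -/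

import Mathlib

open Real

noncomputable def lap (N : ℕ) (u : EuclideanSpace ℝ (Fin N) → ℝ)
    (x : EuclideanSpace ℝ (Fin N)) : ℝ :=
  ∑ i : Fin N, fderiv ℝ (fun y => fderiv ℝ u y (EuclideanSpace.single i 1)) x
    (EuclideanSpace.single i 1)

variable {N : ℕ}

local notation "E" => EuclideanSpace ℝ (Fin N)

lemma radial_hasFDerivAt (τ : ℝ) {y : EuclideanSpace ℝ (Fin N)} (hy : y ≠ 0) :
    HasFDerivAt (fun z : EuclideanSpace ℝ (Fin N) => ‖z‖ ^ τ)
      ((τ * ‖y‖ ^ (τ - 2)) • (innerSL ℝ y)) y := by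
  have hn : (0:ℝ) < ‖y‖ := norm_pos_iff.mpr hy
  have h1 : HasFDerivAt (fun z : EuclideanSpace ℝ (Fin N) => ‖z‖ ^ (2:ℕ))
      ((2:ℕ) • (innerSL ℝ y)) y := (hasStrictFDerivAt_norm_sq y).hasFDerivAt
  have h2 : HasDerivAt (fun s : ℝ => s ^ (τ/2)) ((τ/2) * (‖y‖ ^ (2:ℕ)) ^ (τ/2 - 1)) (‖y‖ ^ (2:ℕ)) :=
    Real.hasDerivAt_rpow_const (Or.inl (by positivity))
  have h3 := h2.comp_hasFDerivAt y h1
  have key : (fun z : EuclideanSpace ℝ (Fin N) => (‖z‖ ^ (2:ℕ)) ^ (τ/2)) =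
      (fun z : EuclideanSpace ℝ (Fin N) => ‖z‖ ^ τ) := by
    funext z
    rw [← Real.rpow_natCast ‖z‖ 2, ← Real.rpow_mul (norm_nonneg z)]
    congr 1
    ring
  simp only [Function.comp_def] at h3
  rw [key] at h3
  refine h3.congr_fderiv ?_
  ext z
  simp only [ContinuousLinearMap.smul_apply, innerSL_apply_apply, smul_eq_mul, nsmul_eq_mul]
  have : (‖y‖ ^ (2:ℕ)) ^ (τ/2 - 1) = ‖y‖ ^ (τ - 2) := by
    rw [← Real.rpow_natCast ‖y‖ 2, ← Real.rpow_mul (norm_nonneg y)]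
    congr 1
    ring
  rw [this]
  ring

lemma radial2_hasFDerivAt (a b τ σ : ℝ) {y : EuclideanSpace ℝ (Fin N)} (hy : y ≠ 0) :
    HasFDerivAt (fun z : EuclideanSpace ℝ (Fin N) => a * ‖z‖ ^ τ + b * ‖z‖ ^ σ)
      ((a * τ * ‖y‖ ^ (τ - 2) + b * σ * ‖y‖ ^ (σ - 2)) • (innerSL ℝ y)) y := by
  have h3 := ((radial_hasFDerivAt τ hy).const_mul a).add ((radial_hasFDerivAt σ hy).const_mul b)
  refine h3.congr_fderiv ?_
  rw [smul_smul, smul_smul, ← add_smul]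
  congr 1
  ring

lemma radial2_fderiv (a b τ σ : ℝ) {y : EuclideanSpace ℝ (Fin N)} (hy : y ≠ 0) (i : Fin N) :
    fderiv ℝ (fun z : EuclideanSpace ℝ (Fin N) => a * ‖z‖ ^ τ + b * ‖z‖ ^ σ) y
        (EuclideanSpace.single i 1)
      = (a * τ * ‖y‖ ^ (τ - 2) + b * σ * ‖y‖ ^ (σ - 2)) * y i := by
  rw [(radial2_hasFDerivAt a b τ σ hy).fderiv]
  simp [EuclideanSpace.inner_single_right]

lemma norm_sq_eq_sum {x : EuclideanSpace ℝ (Fin N)} : ‖x‖ ^ (2:ℕ) = ∑ i, x i * x i := by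
  rw [EuclideanSpace.norm_eq, Real.sq_sqrt (by positivity)]
  congr 1
  funext i
  rw [Real.norm_eq_abs, sq_abs, sq]

lemma lap_radial2 (a b τ σ : ℝ) {x : EuclideanSpace ℝ (Fin N)} (hx : x ≠ 0) :
    lap N (fun y => a * ‖y‖ ^ τ + b * ‖y‖ ^ σ) x
      = a * (τ * (τ + N - 2)) * ‖x‖ ^ (τ - 2) + b * (σ * (σ + N - 2)) * ‖x‖ ^ (σ - 2) := by
  have hn : (0:ℝ) < ‖x‖ := norm_pos_iff.mpr hx
  have hstep : ∀ i : Fin N,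
      fderiv ℝ (fun y => fderiv ℝ (fun z : EuclideanSpace ℝ (Fin N) => a * ‖z‖ ^ τ + b * ‖z‖ ^ σ)
          y (EuclideanSpace.single i 1)) x (EuclideanSpace.single i 1)
        = (a * τ * ‖x‖ ^ (τ - 2) + b * σ * ‖x‖ ^ (σ - 2))
          + (a * τ * (τ - 2) * ‖x‖ ^ (τ - 2 - 2) + b * σ * (σ - 2) * ‖x‖ ^ (σ - 2 - 2))
            * (x i * x i) := by
    intro i
    have hev : (fun y => fderiv ℝ (fun z : EuclideanSpace ℝ (Fin N) => a * ‖z‖ ^ τ + b * ‖z‖ ^ σ)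
          y (EuclideanSpace.single i 1)) =ᶠ[nhds x]
        (fun y => (a * τ * ‖y‖ ^ (τ - 2) + b * σ * ‖y‖ ^ (σ - 2)) * y i) := by
      filter_upwards [IsOpen.mem_nhds isOpen_compl_singleton hx] with y hy
      exact radial2_fderiv a b τ σ hy i
    rw [hev.fderiv_eq]
    have hφ := radial2_hasFDerivAt (a * τ) (b * σ) (τ - 2) (σ - 2) hx
    have hproj : HasFDerivAt (fun y : EuclideanSpace ℝ (Fin N) => y i)
        (EuclideanSpace.proj (𝕜 := ℝ) i) x := (EuclideanSpace.proj (𝕜 := ℝ) i).hasFDerivAt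
    have hmul := hφ.mul hproj
    simp only [Pi.mul_def] at hmul
    rw [hmul.fderiv]
    simp [EuclideanSpace.inner_single_right, EuclideanSpace.single_apply]
    ring
  have hA : ‖x‖ ^ (τ - 2 - 2) * ‖x‖ ^ (2:ℕ) = ‖x‖ ^ (τ - 2) := by
    rw [← Real.rpow_natCast ‖x‖ 2, ← Real.rpow_add hn]
    congr 1
    push_cast
    ring
  have hB : ‖x‖ ^ (σ - 2 - 2) * ‖x‖ ^ (2:ℕ) = ‖x‖ ^ (σ - 2) := by
    rw [← Real.rpow_natCast ‖x‖ 2, ← Real.rpow_add hn]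
    congr 1
    push_cast
    ring
  have hsum : (∑ i, x i * x i) = ‖x‖ ^ (2:ℕ) := norm_sq_eq_sum.symm
  calc lap N (fun y => a * ‖y‖ ^ τ + b * ‖y‖ ^ σ) x
      = ∑ _i : Fin N, (a * τ * ‖x‖ ^ (τ - 2) + b * σ * ‖x‖ ^ (σ - 2))
        + (a * τ * (τ - 2) * ‖x‖ ^ (τ - 2 - 2) + b * σ * (σ - 2) * ‖x‖ ^ (σ - 2 - 2))
          * ∑ i, (x i * x i) := by
        rw [lap, Finset.mul_sum, ← Finset.sum_add_distrib]
        exact Finset.sum_congr rfl fun i _ => hstep i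
    _ = a * (τ * (τ + N - 2)) * ‖x‖ ^ (τ - 2) + b * (σ * (σ + N - 2)) * ‖x‖ ^ (σ - 2) := by
        rw [hsum, Finset.sum_const, Finset.card_univ, Fintype.card_fin, nsmul_eq_mul]
        linear_combination (a * τ * (τ - 2)) * hA + (b * σ * (σ - 2)) * hB

theorem stmt_14 (N : ℕ) (hN : 3 ≤ N) (μ₁ μ₂ : ℝ)
    (hμ₁ : -(((N:ℝ) - 2)^2 / 4) ≤ μ₁) (hμ₁' : μ₁ < 0) (hμ₂ : 0 ≤ μ₂)
    (τp1 τp2 τm2 : ℝ)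
    (hτp1 : τp1 = -((N:ℝ) - 2) / 2 + Real.sqrt (μ₁ + ((N:ℝ) - 2)^2 / 4))
    (hτp2 : τp2 = -((N:ℝ) - 2) / 2 + Real.sqrt (μ₂ + ((N:ℝ) - 2)^2 / 4))
    (hτm2 : τm2 = -((N:ℝ) - 2) / 2 - Real.sqrt (μ₂ + ((N:ℝ) - 2)^2 / 4))
    (p q : ℝ) (hp : 1 < p) (hq : 1 < q)
    (hq1 : 2 / (-τp1) < q) (hq2 : q < ((N:ℝ) + τp2) / (-τp1))
    (hc : 0 < τp1 * (p * q - 1) + 2 * p + 2)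
    (τ1 τ2 : ℝ) (hτ2 : τ2 = q * τp1 + 2) (hτ1 : τ1 = p * τ2 + 2)
    (hτ2r : τm2 < τ2 ∧ τ2 < τp2) (hτ1r : τp1 < τ1) :
    ∃ t : ℝ, 0 < t ∧
      ∀ x : EuclideanSpace ℝ (Fin N), x ≠ 0 → ‖x‖ < 1 →
        (let u : EuclideanSpace ℝ (Fin N) → ℝ :=
            fun y => t * (‖y‖ ^ τp1 - ‖y‖ ^ τ1)
         let v : EuclideanSpace ℝ (Fin N) → ℝ := fun y => t * ‖y‖ ^ τ2
         (v x) ^ p ≤ -lap N u x + μ₁ / ‖x‖^2 * u x ∧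
         (u x) ^ q ≤ -lap N v x + μ₂ / ‖x‖^2 * v x) := by
  have hNR : (3:ℝ) ≤ (N:ℝ) := by exact_mod_cast hN
  have h1arg : 0 ≤ μ₁ + ((N:ℝ) - 2)^2 / 4 := by linarith
  have h2arg : 0 ≤ μ₂ + ((N:ℝ) - 2)^2 / 4 := by nlinarith
  have hs1 : Real.sqrt (μ₁ + ((N:ℝ) - 2)^2 / 4) ^ 2 = μ₁ + ((N:ℝ) - 2)^2 / 4 :=
    Real.sq_sqrt h1arg
  have hs2 : Real.sqrt (μ₂ + ((N:ℝ) - 2)^2 / 4) ^ 2 = μ₂ + ((N:ℝ) - 2)^2 / 4 :=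
    Real.sq_sqrt h2arg
  have hs1nn : 0 ≤ Real.sqrt (μ₁ + ((N:ℝ) - 2)^2 / 4) := Real.sqrt_nonneg _
  have hμτ1 : τp1 * (τp1 + (N:ℝ) - 2) = μ₁ := by
    rw [hτp1]; linear_combination hs1
  set C₁ : ℝ := τ1 * (τ1 + (N:ℝ) - 2) - μ₁ with hC₁def
  set C₂ : ℝ := μ₂ - τ2 * (τ2 + (N:ℝ) - 2) with hC₂def
  have hC1 : 0 < C₁ := by
    have key : C₁ = (τ1 - τp1) *
        (τ1 - (-((N:ℝ) - 2) / 2 - Real.sqrt (μ₁ + ((N:ℝ) - 2)^2 / 4))) := by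
      rw [hC₁def, hτp1]; linear_combination hs1
    rw [key]
    apply mul_pos (sub_pos.mpr hτ1r)
    rw [hτp1] at hτ1r
    linarith
  have hC2 : 0 < C₂ := by
    have key : C₂ = (τp2 - τ2) * (τ2 - τm2) := by
      rw [hC₂def, hτp2, hτm2]; linear_combination -hs2
    rw [key]
    exact mul_pos (sub_pos.mpr hτ2r.2) (sub_pos.mpr hτ2r.1)
  set t : ℝ := min 1 (min (C₁ ^ ((1:ℝ)/(p-1))) (C₂ ^ ((1:ℝ)/(q-1)))) with htdef
  have ht : 0 < t := lt_min one_pos (lt_min (Real.rpow_pos_of_pos hC1 _)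
    (Real.rpow_pos_of_pos hC2 _))
  have htp : t ^ (p - 1) ≤ C₁ := by
    have h : t ≤ C₁ ^ ((1:ℝ)/(p-1)) :=
      le_trans (min_le_right (1:ℝ) _) (min_le_left _ _)
    calc t ^ (p - 1) ≤ (C₁ ^ ((1:ℝ)/(p-1))) ^ (p - 1) :=
          Real.rpow_le_rpow ht.le h (by linarith)
      _ = C₁ := by
          rw [← Real.rpow_mul hC1.le,
            one_div_mul_cancel (show p - 1 ≠ 0 from ne_of_gt (by linarith)), Real.rpow_one]
  have htq : t ^ (q - 1) ≤ C₂ := by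
    have h : t ≤ C₂ ^ ((1:ℝ)/(q-1)) :=
      le_trans (min_le_right (1:ℝ) _) (min_le_right _ _)
    calc t ^ (q - 1) ≤ (C₂ ^ ((1:ℝ)/(q-1))) ^ (q - 1) :=
          Real.rpow_le_rpow ht.le h (by linarith)
      _ = C₂ := by
          rw [← Real.rpow_mul hC2.le,
            one_div_mul_cancel (show q - 1 ≠ 0 from ne_of_gt (by linarith)), Real.rpow_one]
  have htpC : t ^ p ≤ t * C₁ := by
    calc t ^ p = t * t ^ (p - 1) := by
          rw [show p = 1 + (p - 1) by ring, Real.rpow_add ht, Real.rpow_one]; ring_nf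
      _ ≤ t * C₁ := mul_le_mul_of_nonneg_left htp ht.le
  have htqC : t ^ q ≤ t * C₂ := by
    calc t ^ q = t * t ^ (q - 1) := by
          rw [show q = 1 + (q - 1) by ring, Real.rpow_add ht, Real.rpow_one]; ring_nf
      _ ≤ t * C₂ := mul_le_mul_of_nonneg_left htq ht.le
  refine ⟨t, ht, ?_⟩
  intro x hx hxn
  have hr : (0:ℝ) < ‖x‖ := norm_pos_iff.mpr hx
  have hne : (‖x‖:ℝ) ^ (2:ℕ) ≠ 0 := by positivity
  have e1 : ‖x‖ ^ τp1 = ‖x‖ ^ (τp1 - 2) * ‖x‖ ^ (2:ℕ) := by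
    rw [← Real.rpow_natCast ‖x‖ 2, ← Real.rpow_add hr]; norm_num
  have e2 : ‖x‖ ^ τ1 = ‖x‖ ^ (τ1 - 2) * ‖x‖ ^ (2:ℕ) := by
    rw [← Real.rpow_natCast ‖x‖ 2, ← Real.rpow_add hr]; norm_num
  have e3 : ‖x‖ ^ τ2 = ‖x‖ ^ (τ2 - 2) * ‖x‖ ^ (2:ℕ) := by
    rw [← Real.rpow_natCast ‖x‖ 2, ← Real.rpow_add hr]; norm_num
  constructor
  · -- first inequality
    have hueq : (fun y : EuclideanSpace ℝ (Fin N) => t * (‖y‖ ^ τp1 - ‖y‖ ^ τ1)) =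
        fun y => t * ‖y‖ ^ τp1 + (-t) * ‖y‖ ^ τ1 := by funext y; ring
    have hRHS : -lap N (fun y => t * (‖y‖ ^ τp1 - ‖y‖ ^ τ1)) x
        + μ₁ / ‖x‖^2 * (t * (‖x‖ ^ τp1 - ‖x‖ ^ τ1)) = t * C₁ * ‖x‖ ^ (τ1 - 2) := by
      rw [hueq, lap_radial2 t (-t) τp1 τ1 hx, e1, e2, hC₁def]
      field_simp
      linear_combination (-(‖x‖ ^ (τp1 - 2))) * hμτ1
    have hL : (t * ‖x‖ ^ τ2) ^ p = t ^ p * ‖x‖ ^ (τ1 - 2) := by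
      rw [Real.mul_rpow ht.le (Real.rpow_nonneg (norm_nonneg x) _),
        ← Real.rpow_mul (norm_nonneg x), show τ2 * p = τ1 - 2 by rw [hτ1]; ring]
    rw [hL, hRHS]
    exact mul_le_mul_of_nonneg_right htpC (Real.rpow_nonneg (norm_nonneg x) _)
  · -- second inequality
    have hveq : (fun y : EuclideanSpace ℝ (Fin N) => t * ‖y‖ ^ τ2) =
        fun y => t * ‖y‖ ^ τ2 + 0 * ‖y‖ ^ τ2 := by funext y; ring
    have hRHS : -lap N (fun y => t * ‖y‖ ^ τ2) x
        + μ₂ / ‖x‖^2 * (t * ‖x‖ ^ τ2) = t * C₂ * ‖x‖ ^ (τ2 - 2) := by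
      rw [hveq, lap_radial2 t 0 τ2 τ2 hx, e3, hC₂def]
      field_simp
      ring
    have h01 : ‖x‖ ^ τ1 ≤ ‖x‖ ^ τp1 := Real.rpow_le_rpow_of_exponent_ge hr hxn.le hτ1r.le
    have hu0 : 0 ≤ t * (‖x‖ ^ τp1 - ‖x‖ ^ τ1) := mul_nonneg ht.le (by linarith)
    have hub : t * (‖x‖ ^ τp1 - ‖x‖ ^ τ1) ≤ t * ‖x‖ ^ τp1 :=
      mul_le_mul_of_nonneg_left (by linarith [Real.rpow_nonneg (norm_nonneg x) τ1]) ht.le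
    have hL : (t * (‖x‖ ^ τp1 - ‖x‖ ^ τ1)) ^ q ≤ t ^ q * ‖x‖ ^ (τ2 - 2) := by
      calc (t * (‖x‖ ^ τp1 - ‖x‖ ^ τ1)) ^ q ≤ (t * ‖x‖ ^ τp1) ^ q :=
            Real.rpow_le_rpow hu0 hub (by linarith)
        _ = t ^ q * ‖x‖ ^ (τ2 - 2) := by
            rw [Real.mul_rpow ht.le (Real.rpow_nonneg (norm_nonneg x) _),
              ← Real.rpow_mul (norm_nonneg x), show τp1 * q = τ2 - 2 by rw [hτ2]; ring]
    rw [hRHS]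
    calc (t * (‖x‖ ^ τp1 - ‖x‖ ^ τ1)) ^ q ≤ t ^ q * ‖x‖ ^ (τ2 - 2) := hL
      _ ≤ t * C₂ * ‖x‖ ^ (τ2 - 2) :=
          mul_le_mul_of_nonneg_right htqC (Real.rpow_nonneg (norm_nonneg x) _)
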